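/- Let Σ be an n×n nonnegative matrix measure on ℝ, and let Ω_Σ := { f ∈ ℂⁿ : for every Borel set δ, ⟪Σ(δ)f, f⟫ = 0 implies Σ(δ) = 0 } be the set of vectors of maximal type for Σ. Then Ω_Σ is a Gδ subset of ℂⁿ and its complement ℂⁿ \ Ω_Σ is a meagre (first category) set; in particular Ω_Σ is a dense Gδ set of second category. -/

import Mathlib

open MeasureTheory Matrix
open scoped ComplexOrder

namespace MaxType

variable {n : ℕ}

lemma matrix_eq_zero_of_mulVec {M : Matrix (Fin n) (Fin n) ℂ} (h : ∀ f, M *ᵥ f = 0) :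
    M = 0 := by
  ext i j
  have := congrFun (h (Pi.single j 1)) i
  simpa [Matrix.mulVec_single] using this

/-- The real quadratic form `M ↦ re (f* M f)` as an `ℝ`-linear map. -/
noncomputable def qf (f : Fin n → ℂ) : Matrix (Fin n) (Fin n) ℂ →ₗ[ℝ] ℝ where
  toFun M := (star f ⬝ᵥ M *ᵥ f).re
  map_add' M N := by simp [add_mulVec, dotProduct_add]
  map_smul' r M := by simp [smul_mulVec, dotProduct_smul]

variable (S : VectorMeasure ℝ (Matrix (Fin n) (Fin n) ℂ))
variable (hpos : ∀ δ : Set ℝ, MeasurableSet δ → (S δ).PosSemidef)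

/-- The scalar measure `μ_f : δ ↦ re (f* S(δ) f)`. -/
noncomputable def muF (hpos : ∀ δ : Set ℝ, MeasurableSet δ → (S δ).PosSemidef)
    (f : Fin n → ℂ) : Measure ℝ :=
  Measure.ofMeasurable (fun s _ => ENNReal.ofReal (qf f (S s)))
    (by simp)
    (by
      intro g hg hd
      have hs : HasSum (fun i => S (g i)) (S (⋃ i, g i)) := S.m_iUnion hg hd
      have hs2 : HasSum (fun i => qf f (S (g i))) (qf f (S (⋃ i, g i))) :=
        hs.map (qf f).toAddMonoidHom (qf f).continuous_of_finiteDimensional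
      have hnn : ∀ i, 0 ≤ qf f (S (g i)) := fun i => (hpos (g i) (hg i)).re_dotProduct_nonneg f
      rw [← hs2.tsum_eq]
      exact ENNReal.ofReal_tsum_of_nonneg hnn hs2.summable)

lemma muF_apply (f : Fin n → ℂ) {δ : Set ℝ} (hδ : MeasurableSet δ) :
    muF S hpos f δ = ENNReal.ofReal (qf f (S δ)) :=
  Measure.ofMeasurable_apply δ hδ

lemma muF_eq_zero_iff (f : Fin n → ℂ) {δ : Set ℝ} (hδ : MeasurableSet δ) :
    muF S hpos f δ = 0 ↔ S δ *ᵥ f = 0 := by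
  rw [muF_apply S hpos f hδ, ENNReal.ofReal_eq_zero,
    ← (hpos δ hδ).dotProduct_mulVec_zero_iff f]
  have h0 : 0 ≤ star f ⬝ᵥ S δ *ᵥ f := (hpos δ hδ).dotProduct_mulVec_nonneg f
  rw [Complex.nonneg_iff] at h0
  constructor
  · intro h
    exact Complex.ext (le_antisymm h h0.1) h0.2.symm
  · intro h
    simp [qf, h]

instance muF_finite (f : Fin n → ℂ) : IsFiniteMeasure (muF S hpos f) :=
  ⟨by rw [muF_apply S hpos f MeasurableSet.univ]; exact ENNReal.ofReal_lt_top⟩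

/-- The trace measure `τ : δ ↦ tr (S δ)` (as a sum of the diagonal scalar measures). -/
noncomputable def tau : Measure ℝ := ∑ i : Fin n, muF S hpos (Pi.single i 1)

instance tau_finite : IsFiniteMeasure (tau S hpos) := by
  constructor
  rw [tau, Measure.finset_sum_apply]
  exact ENNReal.sum_lt_top.mpr fun i _ => measure_lt_top _ _

lemma tau_eq_zero_iff {δ : Set ℝ} (hδ : MeasurableSet δ) :
    tau S hpos δ = 0 ↔ S δ = 0 := by
  rw [tau, Measure.finset_sum_apply, Finset.sum_eq_zero_iff]
  constructor
  · intro h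
    apply matrix_eq_zero_of_mulVec
    intro f
    have hker : ∀ i : Fin n, S δ *ᵥ (Pi.single i 1) = 0 := fun i =>
      (muF_eq_zero_iff S hpos _ hδ).mp (h i (Finset.mem_univ i))
    have : ∀ i j, S δ i j = 0 := by
      intro i j
      have := congrFun (hker j) i
      simpa [Matrix.mulVec_single] using this
    funext i
    simp only [Matrix.mulVec, dotProduct]
    exact Finset.sum_eq_zero fun j _ => by rw [this i j, zero_mul]
  · intro h i _
    rw [muF_eq_zero_iff S hpos _ hδ, h, Matrix.zero_mulVec]

end MaxType

namespace MaxType2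
open MaxType

variable {n : ℕ} (S : VectorMeasure ℝ (Matrix (Fin n) (Fin n) ℂ))
variable (hpos : ∀ δ : Set ℝ, MeasurableSet δ → (S δ).PosSemidef)

/-- For every subspace `K` there is a maximal carrier `Δ` on which the kernel of `S`
contains `K`: any other such set is `τ`-a.e. contained in `Δ`. -/
lemma exists_carrier (K : Submodule ℂ (Fin n → ℂ)) :
    ∃ Δ : Set ℝ, MeasurableSet Δ ∧ (∀ f ∈ K, S Δ *ᵥ f = 0) ∧
      ∀ δ : Set ℝ, MeasurableSet δ → (∀ f ∈ K, S δ *ᵥ f = 0) →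
        tau S hpos (δ \ Δ) = 0 := by
  classical
  set T : Set (Set ℝ) := {t | MeasurableSet t ∧ ∀ f ∈ K, S t *ᵥ f = 0} with hT
  have hTempty : (∅ : Set ℝ) ∈ T := ⟨MeasurableSet.empty, fun f _ => by simp [S.empty]⟩
  have him : (tau S hpos '' T).Nonempty := ⟨_, Set.mem_image_of_mem _ hTempty⟩
  obtain ⟨u, hmono, htend, hmem⟩ := exists_seq_tendsto_sSup him (OrderTop.bddAbove _)
  choose t ht hut using hmem
  set Δ := ⋃ j, t j with hΔ
  have hΔmeas : MeasurableSet Δ := MeasurableSet.iUnion fun j => (ht j).1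
  have hΔker : ∀ f ∈ K, S Δ *ᵥ f = 0 := by
    intro f hf
    rw [← muF_eq_zero_iff S hpos f hΔmeas]
    exact measure_iUnion_null fun j =>
      (muF_eq_zero_iff S hpos f (ht j).1).mpr ((ht j).2 f hf)
  have hΔT : Δ ∈ T := ⟨hΔmeas, hΔker⟩
  have hle : tau S hpos Δ ≤ sSup (tau S hpos '' T) :=
    le_sSup (Set.mem_image_of_mem _ hΔT)
  have hge : sSup (tau S hpos '' T) ≤ tau S hpos Δ := by
    refine le_of_tendsto htend (Filter.Eventually.of_forall fun j => ?_)
    rw [← hut j]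
    exact measure_mono (Set.subset_iUnion t j)
  refine ⟨Δ, hΔmeas, hΔker, ?_⟩
  intro δ hδ hδker
  have hUT : δ ∪ Δ ∈ T := by
    refine ⟨hδ.union hΔmeas, fun f hf => ?_⟩
    rw [← muF_eq_zero_iff S hpos f (hδ.union hΔmeas)]
    have hle0 : muF S hpos f (δ ∪ Δ) ≤ 0 := by
      calc muF S hpos f (δ ∪ Δ) ≤ muF S hpos f δ + muF S hpos f Δ := measure_union_le δ Δ
        _ = 0 := by
          rw [(muF_eq_zero_iff S hpos f hδ).mpr (hδker f hf),
            (muF_eq_zero_iff S hpos f hΔmeas).mpr (hΔker f hf), add_zero]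
    exact le_antisymm hle0 (zero_le)
  have hUle : tau S hpos (δ ∪ Δ) ≤ tau S hpos Δ := by
    refine le_trans (le_sSup (Set.mem_image_of_mem _ hUT)) hge
  have hdiff : δ \ Δ = (δ ∪ Δ) \ Δ := by rw [Set.union_diff_right]
  rw [hdiff, measure_diff Set.subset_union_right hΔmeas.nullMeasurableSet (measure_ne_top _ _)]
  exact tsub_eq_zero_of_le hUle

end MaxType2


/-- The set of vectors of maximal type for an `n × n` nonnegative matrix measure `S`:
those `f ∈ ℂⁿ` such that the scalar measure `μ_f : δ ↦ ⟪S(δ)f, f⟫ = f* S(δ) f`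
is equivalent to `S` (since `μ_f ≪ S` always holds, this means
`⟪S(δ)f, f⟫ = 0 → S(δ) = 0`). -/
def maximalTypeSet (n : ℕ) (S : VectorMeasure ℝ (Matrix (Fin n) (Fin n) ℂ)) :
    Set (Fin n → ℂ) :=
  {f | ∀ δ : Set ℝ, MeasurableSet δ → star f ⬝ᵥ (S δ) *ᵥ f = 0 → S δ = 0}

open MaxType MaxType2 in
/-- **Theorem 3(a), finite-dimensional case.** For a nonnegative matrix measure `S`,
the set `Ω_S` of vectors of maximal type is a `Gδ` set whose complement is meagre
(first Baire category); in particular `Ω_S` is a dense `Gδ` set of second category. -/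
theorem stmt_2 (n : ℕ)
    (S : VectorMeasure ℝ (Matrix (Fin n) (Fin n) ℂ))
    (hpos : ∀ δ : Set ℝ, MeasurableSet δ → (S δ).PosSemidef) :
    IsGδ (maximalTypeSet n S) ∧ IsMeagre (maximalTypeSet n S)ᶜ ∧
      Dense (maximalTypeSet n S) := by
  classical
  set Kset : Set (Submodule ℂ (Fin n → ℂ)) :=
    {K | ∃ δ : Set ℝ, MeasurableSet δ ∧ S δ ≠ 0 ∧ K = LinearMap.ker (S δ).mulVecLin}
    with hKsetdef
  have hCunion : (maximalTypeSet n S)ᶜ = ⋃ K ∈ Kset, (K : Set (Fin n → ℂ)) := by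
    ext f
    simp only [Set.mem_compl_iff, maximalTypeSet, Set.mem_setOf_eq, Set.mem_iUnion]
    constructor
    · intro hf
      push_neg at hf
      obtain ⟨δ, hδ, hq, hS0⟩ := hf
      refine ⟨LinearMap.ker (S δ).mulVecLin, ⟨δ, hδ, hS0, rfl⟩, ?_⟩
      exact LinearMap.mem_ker.mpr ((hpos δ hδ).dotProduct_mulVec_zero_iff f |>.mp hq)
    · rintro ⟨K, ⟨δ, hδ, hS0, rfl⟩, hfK⟩
      intro hmax
      exact hS0 (hmax δ hδ (((hpos δ hδ).dotProduct_mulVec_zero_iff f).mpr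
        (LinearMap.mem_ker.mp hfK)))
  -- maximal elements of `Kset`
  set Mset : Set (Submodule ℂ (Fin n → ℂ)) :=
    {K | K ∈ Kset ∧ ∀ K' ∈ Kset, K ≤ K' → K = K'} with hMsetdef
  have hMsub : Mset ⊆ Kset := fun K hK => hK.1
  have hmaxext : ∀ K ∈ Kset, ∃ K' ∈ Mset, K ≤ K' := by
    have main : ∀ d : ℕ, ∀ K ∈ Kset, n - Module.finrank ℂ K ≤ d → ∃ K' ∈ Mset, K ≤ K' := by
      intro d
      induction d with
      | zero =>
        intro K hK hd
        by_cases hm : ∀ K' ∈ Kset, K ≤ K' → K = K'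
        · exact ⟨K, ⟨hK, hm⟩, le_refl K⟩
        · exfalso
          push_neg at hm
          obtain ⟨K', hK', hle, hne⟩ := hm
          have hlt : K < K' := lt_of_le_of_ne hle hne
          have h1 : Module.finrank ℂ K < Module.finrank ℂ K' :=
            Submodule.finrank_lt_finrank_of_lt hlt
          have h2 : Module.finrank ℂ K' ≤ Module.finrank ℂ (Fin n → ℂ) :=
            Submodule.finrank_le K'
          rw [Module.finrank_fin_fun] at h2
          omega
      | succ d ih =>
        intro K hK hd
        by_cases hm : ∀ K' ∈ Kset, K ≤ K' → K = K'
        · exact ⟨K, ⟨hK, hm⟩, le_refl K⟩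
        · push_neg at hm
          obtain ⟨K', hK', hle, hne⟩ := hm
          have hlt : K < K' := lt_of_le_of_ne hle hne
          have h1 : Module.finrank ℂ K < Module.finrank ℂ K' :=
            Submodule.finrank_lt_finrank_of_lt hlt
          obtain ⟨K'', hK'', hle''⟩ := ih K' hK' (by omega)
          exact ⟨K'', hK'', le_trans hle hle''⟩
    intro K hK
    exact main (n - Module.finrank ℂ K) K hK le_rfl
  -- choose maximal carriers
  choose D hDmeas hDker hDmax using fun K : Submodule ℂ (Fin n → ℂ) =>
    exists_carrier S hpos K
  -- for K ∈ Kset, the carrier has positive trace measure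
  have htauD : ∀ K ∈ Kset, tau S hpos (D K) ≠ 0 := by
    rintro K ⟨δ₀, hδ₀, hS0, hKeq⟩
    have hδ₀ker : ∀ f ∈ K, S δ₀ *ᵥ f = 0 := by
      intro f hf
      rw [hKeq] at hf
      exact LinearMap.mem_ker.mp hf
    have hdiff0 : tau S hpos (δ₀ \ D K) = 0 := hDmax K δ₀ hδ₀ hδ₀ker
    intro h
    apply hS0
    rw [← tau_eq_zero_iff S hpos hδ₀]
    have hsub : tau S hpos δ₀ ≤ tau S hpos (δ₀ \ D K) + tau S hpos (D K) := by
      refine le_trans (measure_mono ?_) (measure_union_le _ _)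
      intro x hx
      by_cases hxD : x ∈ D K
      · exact Set.mem_union_right _ hxD
      · exact Set.mem_union_left _ ⟨hx, hxD⟩
    rw [hdiff0, h, add_zero] at hsub
    exact le_antisymm hsub (zero_le)
  have hSD : ∀ K ∈ Kset, S (D K) ≠ 0 := by
    intro K hK h
    exact htauD K hK ((tau_eq_zero_iff S hpos (hDmeas K)).mpr h)
  -- a maximal K is the kernel of S on its carrier
  have hker_eq : ∀ K ∈ Mset, LinearMap.ker (S (D K)).mulVecLin = K := by
    rintro K ⟨hK, hmax⟩
    have hKle : K ≤ LinearMap.ker (S (D K)).mulVecLin := fun f hf =>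
      LinearMap.mem_ker.mpr (hDker K f hf)
    exact (hmax _ ⟨D K, hDmeas K, hSD K hK, rfl⟩ hKle).symm
  -- the carriers of distinct maximal elements are a.e. disjoint
  have hdisj : ∀ K₁ ∈ Mset, ∀ K₂ ∈ Mset, K₁ ≠ K₂ →
      tau S hpos (D K₁ ∩ D K₂) = 0 := by
    intro K₁ h₁ K₂ h₂ hne
    by_contra hA
    set A := D K₁ ∩ D K₂ with hAdef
    have hmeasA : MeasurableSet A := (hDmeas K₁).inter (hDmeas K₂)
    have hSA : S A ≠ 0 := fun h => hA ((tau_eq_zero_iff S hpos hmeasA).mpr h)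
    have hKA : LinearMap.ker (S A).mulVecLin ∈ Kset := ⟨A, hmeasA, hSA, rfl⟩
    have key : ∀ K ∈ Mset, A ⊆ D K → K = LinearMap.ker (S A).mulVecLin := by
      rintro K ⟨hK, hmax⟩ hsub
      refine hmax _ hKA ?_
      intro f hf
      have hf' : S (D K) *ᵥ f = 0 := hDker K f hf
      have h0 : muF S hpos f A = 0 :=
        le_antisymm (le_trans (measure_mono hsub)
          (le_of_eq ((muF_eq_zero_iff S hpos f (hDmeas K)).mpr hf'))) (zero_le)
      exact LinearMap.mem_ker.mpr ((muF_eq_zero_iff S hpos f hmeasA).mp h0)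
    exact hne ((key K₁ h₁ Set.inter_subset_left).trans
      (key K₂ h₂ Set.inter_subset_right).symm)
  -- countability of the maximal elements
  have hMcnt : Mset.Countable := by
    have key := MeasureTheory.Measure.countable_meas_pos_of_disjoint_iUnion₀
      (μ := tau S hpos) (As := fun K : ↥Mset => D (K : Submodule ℂ (Fin n → ℂ)))
      (fun K => (hDmeas _).nullMeasurableSet)
      (fun K₁ K₂ hne => hdisj K₁ K₁.2 K₂ K₂.2 fun h => hne (Subtype.ext h))
    have huniv : {i : ↥Mset | 0 < tau S hpos (D (i : Submodule ℂ (Fin n → ℂ)))} =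
        Set.univ := by
      ext K
      simp only [Set.mem_setOf_eq, Set.mem_univ, iff_true]
      exact pos_iff_ne_zero.mpr (htauD K (hMsub K.2))
    rw [huniv] at key
    rw [← Set.countable_coe_iff]
    exact Set.countable_univ_iff.mp key
  -- the complement is the union over the (countably many) maximal elements
  have hCM : (maximalTypeSet n S)ᶜ = ⋃ K ∈ Mset, (K : Set (Fin n → ℂ)) := by
    rw [hCunion]
    apply Set.Subset.antisymm
    · intro f hf
      rw [Set.mem_iUnion₂] at hf ⊢
      obtain ⟨K, hK, hfK⟩ := hf
      obtain ⟨K', hK', hle⟩ := hmaxext K hK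
      exact ⟨K', hK', hle hfK⟩
    · intro f hf
      rw [Set.mem_iUnion₂] at hf ⊢
      obtain ⟨K, hK, hfK⟩ := hf
      exact ⟨K, hMsub hK, hfK⟩
  -- members of Kset are proper subspaces
  have hproper : ∀ K ∈ Kset, K ≠ (⊤ : Submodule ℂ (Fin n → ℂ)) := by
    rintro K ⟨δ, hδ, hS0, rfl⟩ htop
    apply hS0
    apply matrix_eq_zero_of_mulVec
    intro f
    have hf : f ∈ LinearMap.ker (S δ).mulVecLin := htop ▸ Submodule.mem_top
    exact LinearMap.mem_ker.mp hf
  have hclosed : ∀ K : Submodule ℂ (Fin n → ℂ), IsClosed (K : Set (Fin n → ℂ)) :=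
    fun K => Submodule.closed_of_finiteDimensional K
  have hnwd : ∀ K ∈ Mset, IsNowhereDense (K : Set (Fin n → ℂ)) := by
    intro K hK
    have hint : interior (K : Set (Fin n → ℂ)) = ∅ := by
      by_contra h
      exact hproper K (hMsub hK)
        (Submodule.eq_top_of_nonempty_interior' K (Set.nonempty_iff_ne_empty.mpr h))
    simp only [IsNowhereDense, (hclosed K).closure_eq, hint]
  -- meagreness of the complement
  have hmeagre : IsMeagre (maximalTypeSet n S)ᶜ := by
    rw [isMeagre_iff_countable_union_isNowhereDense]
    refine ⟨(fun K : Submodule ℂ (Fin n → ℂ) => (K : Set (Fin n → ℂ))) '' Mset,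
      ?_, hMcnt.image _, ?_⟩
    · rintro t ⟨K, hK, rfl⟩
      exact hnwd K hK
    · rw [hCM, Set.sUnion_image]
  -- Gδ
  have hGδ : IsGδ (maximalTypeSet n S) := by
    have heq : maximalTypeSet n S = ⋂ K ∈ Mset, ((K : Set (Fin n → ℂ))ᶜ) := by
      rw [← compl_compl (maximalTypeSet n S), hCM, Set.compl_iUnion₂]
    rw [heq]
    exact IsGδ.biInter hMcnt fun K _ => (hclosed K).isOpen_compl.isGδ
  -- density
  have hdense : Dense (maximalTypeSet n S) := by
    have hres : ((maximalTypeSet n S)ᶜ)ᶜ ∈ residual (Fin n → ℂ) := hmeagre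
    rw [compl_compl] at hres
    exact dense_of_mem_residual hres
  exact ⟨hGδ, hmeagre, hdense⟩
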